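/- Let ν be a real number with ν ≠ 1 and ν ≠ 2, and let a, c : ℝ → ℝ be continuous. Define F(x) = exp((2−ν)·∫₀ˣ a(ξ) dξ), G(x) = (2−ν)·(1−ν)·∫₀ˣ c(ξ)·F(ξ) dξ, and the Lagrangian L(x, v, t) = F(x)·v^{2−ν} − G(x) (with real powers of v defined for v > 0). Then a twice differentiable curve x : ℝ → ℝ with x'(t) > 0 for all t satisfies the Euler–Lagrange equation of L if and only if x''(t) + a(x(t))·x'(t)² + c(x(t))·x'(t)^ν = 0 for all t ∈ ℝ. -/

import Mathlib

/-- Partial derivative of the Lagrangian `L x v t` in the velocity argument. -/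
noncomputable def pv (L : ℝ → ℝ → ℝ → ℝ) (x v t : ℝ) : ℝ := deriv (fun w => L x w t) v

/-- Partial derivative of the Lagrangian `L x v t` in the position argument. -/
noncomputable def px (L : ℝ → ℝ → ℝ → ℝ) (x v t : ℝ) : ℝ := deriv (fun y => L y v t) x

/-- A curve `x` satisfies the Euler–Lagrange equation of `L`:
`(d/dt)[(∂L/∂v)(x t, x' t, t)] = (∂L/∂x)(x t, x' t, t)` for all `t`. -/
def SatisfiesEL (L : ℝ → ℝ → ℝ → ℝ) (x : ℝ → ℝ) : Prop :=
  ∀ t : ℝ, deriv (fun s => pv L (x s) (deriv x s) s) t = px L (x t) (deriv x t) t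

/-- Partial derivative of `f (x, t)` in the first argument. -/
noncomputable def pd1 (f : ℝ × ℝ → ℝ) (x t : ℝ) : ℝ := deriv (fun y => f (y, t)) x

/-- Partial derivative of `f (x, t)` in the second argument. -/
noncomputable def pd2 (f : ℝ × ℝ → ℝ) (x t : ℝ) : ℝ := deriv (fun s => f (x, s)) t

theorem monomial_lagrangian_autonomous
    (ν : ℝ) (hν1 : ν ≠ 1) (hν2 : ν ≠ 2)
    (a c : ℝ → ℝ) (ha : Continuous a) (hc : Continuous c)
    (F G : ℝ → ℝ)
    (hF : ∀ x : ℝ, F x = Real.exp ((2 - ν) * ∫ ξ in (0:ℝ)..x, a ξ))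
    (hG : ∀ x : ℝ, G x = (2 - ν) * (1 - ν) * ∫ ξ in (0:ℝ)..x, c ξ * F ξ)
    (L : ℝ → ℝ → ℝ → ℝ)
    (hL : ∀ x t : ℝ, ∀ v : ℝ, 0 < v → L x v t = F x * v ^ (2 - ν) - G x)
    (x : ℝ → ℝ) (hx : Differentiable ℝ x) (hx' : Differentiable ℝ (deriv x))
    (hxpos : ∀ t : ℝ, 0 < deriv x t) :
    SatisfiesEL L x ↔
      ∀ t : ℝ, deriv (deriv x) t + a (x t) * (deriv x t) ^ 2
        + c (x t) * (deriv x t) ^ ν = 0 := by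
  have h2ν : (2 : ℝ) - ν ≠ 0 := sub_ne_zero.mpr (Ne.symm hν2)
  have h1ν : (1 : ℝ) - ν ≠ 0 := sub_ne_zero.mpr (Ne.symm hν1)
  have hFpos : ∀ y, 0 < F y := fun y => (hF y) ▸ Real.exp_pos _
  -- derivative of F
  have hFd : ∀ y : ℝ, HasDerivAt F ((2 - ν) * a y * F y) y := by
    intro y
    have hI : HasDerivAt (fun u => ∫ ξ in (0:ℝ)..u, a ξ) (a y) y :=
      intervalIntegral.integral_hasDerivAt_right (ha.intervalIntegrable _ _)
        ha.stronglyMeasurable.stronglyMeasurableAtFilter ha.continuousAt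
    have h2 : HasDerivAt (fun u => Real.exp ((2 - ν) * ∫ ξ in (0:ℝ)..u, a ξ))
        (Real.exp ((2 - ν) * ∫ ξ in (0:ℝ)..y, a ξ) * ((2 - ν) * a y)) y :=
      (hI.const_mul (2 - ν)).exp
    have hfe : F = fun u => Real.exp ((2 - ν) * ∫ ξ in (0:ℝ)..u, a ξ) := funext hF
    rw [← hF y, ← hfe] at h2
    convert h2 using 1
    ring
  have hGd : ∀ y : ℝ, HasDerivAt G ((2 - ν) * (1 - ν) * (c y * F y)) y := by
    intro y
    have hcF : Continuous fun ξ => c ξ * F ξ := by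
      have : Continuous F := by
        have hfe : F = fun u => Real.exp ((2 - ν) * ∫ ξ in (0:ℝ)..u, a ξ) := funext hF
        rw [hfe]
        have hprim : Continuous fun u => ∫ ξ in (0:ℝ)..u, a ξ :=
          intervalIntegral.continuous_primitive (fun a_1 b => ha.intervalIntegrable a_1 b) 0
        exact Real.continuous_exp.comp (continuous_const.mul hprim)
      exact hc.mul this
    have hI : HasDerivAt (fun u => ∫ ξ in (0:ℝ)..u, c ξ * F ξ) (c y * F y) y :=
      intervalIntegral.integral_hasDerivAt_right (hcF.intervalIntegrable _ _)
        hcF.stronglyMeasurable.stronglyMeasurableAtFilter hcF.continuousAt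
    have hfe : G = fun u => (2 - ν) * (1 - ν) * ∫ ξ in (0:ℝ)..u, c ξ * F ξ := funext hG
    rw [hfe]
    exact hI.const_mul _
  -- pv formula
  have hpv : ∀ X v t : ℝ, 0 < v → pv L X v t = F X * ((2 - ν) * v ^ (1 - ν)) := by
    intro X v t hv
    have hev : (fun w => L X w t) =ᶠ[nhds v] fun w => F X * w ^ (2 - ν) - G X := by
      filter_upwards [eventually_gt_nhds hv] with w hw using hL X t w hw
    have hD : HasDerivAt (fun w => F X * w ^ (2 - ν) - G X)
        (F X * ((2 - ν) * v ^ (2 - ν - 1))) v :=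
      ((Real.hasDerivAt_rpow_const (Or.inl hv.ne')).const_mul (F X)).sub_const (G X)
    have : pv L X v t = F X * ((2 - ν) * v ^ (2 - ν - 1)) := by
      unfold pv
      rw [hev.deriv_eq]
      exact hD.deriv
    rw [this, show (2:ℝ) - ν - 1 = 1 - ν from by ring]
  -- px formula
  have hpx : ∀ X v t : ℝ, 0 < v → px L X v t =
      (2 - ν) * a X * F X * v ^ (2 - ν) - (2 - ν) * (1 - ν) * (c X * F X) := by
    intro X v t hv
    have hfe : (fun y => L y v t) = fun y => F y * v ^ (2 - ν) - G y :=
      funext fun y => hL y t v hv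
    unfold px
    rw [hfe]
    exact (((hFd X).mul_const _).sub (hGd X)).deriv
  -- main pointwise equivalence
  unfold SatisfiesEL
  apply forall_congr'
  intro t
  set u := deriv x t with hu
  have hupos : 0 < u := hxpos t
  -- rewrite inner function
  have hfun : (fun s => pv L (x s) (deriv x s) s)
      = fun s => F (x s) * ((2 - ν) * (deriv x s) ^ (1 - ν)) :=
    funext fun s => hpv (x s) (deriv x s) s (hxpos s)
  have h1 : HasDerivAt (fun s => F (x s)) ((2 - ν) * a (x t) * F (x t) * u) t :=
    (hFd (x t)).comp t (hx t).hasDerivAt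
  have h2 : HasDerivAt (fun s => (deriv x s) ^ (1 - ν))
      ((1 - ν) * u ^ (1 - ν - 1) * deriv (deriv x) t) t :=
    by have := (Real.hasDerivAt_rpow_const (x := u) (p := 1 - ν) (Or.inl hupos.ne')).comp t (hx' t).hasDerivAt; exact this
  have hD : HasDerivAt (fun s => F (x s) * ((2 - ν) * (deriv x s) ^ (1 - ν)))
      ((2 - ν) * a (x t) * F (x t) * u * ((2 - ν) * u ^ (1 - ν))
        + F (x t) * ((2 - ν) * ((1 - ν) * u ^ (1 - ν - 1) * deriv (deriv x) t))) t :=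
    h1.mul (h2.const_mul (2 - ν))
  rw [hfun, hD.deriv, hpx (x t) u t hupos]
  -- algebra
  set A := a (x t)
  set C := c (x t)
  set Fx := F (x t)
  set w := deriv (deriv x) t
  have hFxpos : 0 < Fx := hFpos (x t)
  have e0 : (1 : ℝ) - ν - 1 = -ν := by ring
  have e1 : u ^ (1 - ν) = u ^ (-ν) * u := by
    rw [show (1:ℝ) - ν = -ν + 1 from by ring, Real.rpow_add hupos, Real.rpow_one]
  have e2 : u ^ (2 - ν) = u ^ (-ν) * u ^ (2 : ℕ) := by
    rw [show (2:ℝ) - ν = -ν + 2 from by ring, Real.rpow_add hupos,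
      show ((2:ℝ)) = ((2:ℕ):ℝ) from by norm_num, Real.rpow_natCast]
  have e3 : u ^ (-ν) * u ^ ν = 1 := by
    rw [← Real.rpow_add hupos]; norm_num
  rw [e0]
  set p := u ^ (-ν) with hp
  have hppos : 0 < p := Real.rpow_pos_of_pos hupos _
  have key : (2 - ν) * A * Fx * u * ((2 - ν) * u ^ (1 - ν))
        + Fx * ((2 - ν) * ((1 - ν) * p * w))
      - ((2 - ν) * A * Fx * u ^ (2 - ν) - (2 - ν) * (1 - ν) * (C * Fx))
      = ((2 - ν) * (1 - ν) * Fx * p) * (w + A * u ^ 2 + C * u ^ ν) := by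
    rw [e1, e2]
    linear_combination (-((2 - ν) * (1 - ν) * Fx * C)) * e3
  have hk : ((2 - ν) * (1 - ν) * Fx * p) ≠ 0 := by positivity
  constructor
  · intro h
    have := sub_eq_zero.mpr h
    rw [key] at this
    exact (mul_eq_zero.mp this).resolve_left hk
  · intro h
    have : ((2 - ν) * (1 - ν) * Fx * p) * (w + A * u ^ 2 + C * u ^ ν) = 0 := by
      rw [h, mul_zero]
    rw [← key] at this
    exact sub_eq_zero.mp this
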